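/- Under the forward setting, let τ > 0, z > 0, and define r(θ) = Σ_{s=t}^{t+m} min( w_{s,t} |X_s² − θ|, τ ) · sgn( X_s² − θ ) and B₊(θ) = (σ_t² − θ) + ( κ†_t + 2(σ_t² − θ)² )/( n†_eff · τ ) + τ z. Then for every θ ∈ ℝ, P( r(θ) > B₊(θ) ) ≤ exp( −z + |δ_{0,t}|/τ + 2 δ_{1,t}/τ² ), and symmetrically P( r(θ) < (σ_t² − θ) − ( κ†_t + 2(σ_t² − θ)² )/( n†_eff · τ ) − τ z ) ≤ exp( −z + |δ_{0,t}|/τ + 2 δ_{1,t}/τ² ). -/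

import Mathlib

open MeasureTheory ProbabilityTheory Finset

lemma measurable_realSign : Measurable Real.sign := by
  have h : Real.sign = fun x : ℝ => if x < 0 then (-1 : ℝ) else if 0 < x then 1 else 0 := by
    funext x; rfl
  rw [h]
  exact Measurable.ite measurableSet_Iio measurable_const
    (Measurable.ite measurableSet_Ioi measurable_const measurable_const)

lemma sign_const_mul {c : ℝ} (hc : 0 < c) (y : ℝ) : Real.sign (c * y) = Real.sign y := by
  rcases lt_trichotomy y 0 with h|h|h
  · rw [Real.sign_of_neg h, Real.sign_of_neg (mul_neg_of_pos_of_neg hc h)]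
  · simp [h, Real.sign_zero]
  · rw [Real.sign_of_pos h, Real.sign_of_pos (mul_pos hc h)]

lemma trunc_abs_le (y : ℝ) : |min |y| 1 * Real.sign y| ≤ 1 := by
  have h0 : 0 ≤ min |y| 1 := le_min (abs_nonneg _) zero_le_one
  have h1 : min |y| 1 ≤ 1 := min_le_right _ _
  rcases lt_trichotomy y 0 with h|h|h
  · rw [Real.sign_of_neg h]; rw [abs_le]; constructor <;> nlinarith
  · simp [h, Real.sign_zero]
  · rw [Real.sign_of_pos h]; rw [abs_le]; constructor <;> nlinarith

lemma exp_trunc_le (u : ℝ) : Real.exp (min |u| 1 * Real.sign u) ≤ 1 + u + u ^ 2 := by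
  rcases le_or_gt |u| 1 with h | h
  · have h1 : min |u| 1 = |u| := min_eq_left h
    have h2 : |u| * Real.sign u = u := by
      rcases lt_trichotomy u 0 with hc|hc|hc
      · rw [Real.sign_of_neg hc, abs_of_neg hc]; ring
      · simp [hc]
      · rw [Real.sign_of_pos hc, abs_of_pos hc]; ring
    rw [h1, h2]
    have hb := Real.exp_bound h (n := 2) (by norm_num)
    simp [Finset.sum_range_succ] at hb
    have := abs_le.1 hb
    nlinarith [sq_abs u, this.1, this.2]
  · have h1 : min |u| 1 = 1 := min_eq_right h.le
    rcases lt_or_ge u 0 with hneg | hpos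
    · rw [h1, Real.sign_of_neg hneg, mul_neg_one]
      have : Real.exp (-1) < 1 := by
        have h := Real.exp_lt_exp.2 (show (-1:ℝ) < 0 by norm_num)
        rwa [Real.exp_zero] at h
      have hu : u < -1 := by
        rcases abs_cases u with ⟨h2,h3⟩|⟨h2,h3⟩ <;> linarith
      nlinarith
    · have hu : 1 < u := by
        rcases abs_cases u with ⟨h2,h3⟩|⟨h2,h3⟩ <;> linarith
      rw [h1, Real.sign_of_pos (by linarith), mul_one]
      have := Real.exp_one_lt_d9
      nlinarith

lemma integral_exp_trunc_le {Ω : Type*} [MeasurableSpace Ω] (μ : Measure Ω)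
    [IsProbabilityMeasure μ] (V : Ω → ℝ) (hm : Measurable V) (h1 : Integrable V μ)
    (h2 : Integrable (fun ω => (V ω)^2) μ) :
    ∫ ω, Real.exp (min |V ω| 1 * Real.sign (V ω)) ∂μ
      ≤ Real.exp ((∫ ω, V ω ∂μ) + ∫ ω, (V ω)^2 ∂μ) := by
  have hmeas : Measurable fun ω => Real.exp (min |V ω| 1 * Real.sign (V ω)) :=
    ((hm.abs.min measurable_const).mul (measurable_realSign.comp hm)).exp
  have hint : Integrable (fun ω => Real.exp (min |V ω| 1 * Real.sign (V ω))) μ := by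
    refine Integrable.mono' (integrable_const (Real.exp 1)) hmeas.aestronglyMeasurable ?_
    filter_upwards with ω
    rw [Real.norm_eq_abs, Real.abs_exp, Real.exp_le_exp]
    exact (le_abs_self _).trans (trunc_abs_le _)
  have hint2 : Integrable (fun ω => 1 + V ω + (V ω)^2) μ := ((integrable_const 1).add h1).add h2
  calc ∫ ω, Real.exp (min |V ω| 1 * Real.sign (V ω)) ∂μ
      ≤ ∫ ω, (1 + V ω + (V ω)^2) ∂μ :=
        integral_mono hint hint2 fun ω => exp_trunc_le (V ω)
    _ = 1 + (∫ ω, V ω ∂μ) + ∫ ω, (V ω)^2 ∂μ := by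
        have e : ∫ ω, (1 + V ω + (V ω)^2) ∂μ
            = (∫ _ω, (1:ℝ) ∂μ) + ((∫ ω, V ω ∂μ) + ∫ ω, (V ω)^2 ∂μ) := by
          have h12 : Integrable (fun ω => V ω + (V ω)^2) μ := h1.add h2
          rw [← integral_add h1 h2, ← integral_add (integrable_const 1) h12]
          exact integral_congr_ae (Filter.Eventually.of_forall fun ω => by ring)
        rw [e, integral_const]
        simp [add_assoc]
    _ ≤ _ := by
        have := Real.add_one_le_exp ((∫ ω, V ω ∂μ) + ∫ ω, (V ω)^2 ∂μ)
        linarith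

lemma huber_chernoff {Ω : Type*} [MeasurableSpace Ω] (μ : Measure Ω) [IsProbabilityMeasure μ]
    (T : Finset ℤ) (Y : ℤ → Ω → ℝ) (hYmeas : ∀ s, Measurable (Y s))
    (hind : iIndepFun Y μ)
    (c : ℤ → ℝ) (hc : ∀ s, 0 < c s)
    (τ B : ℝ) (hτ : 0 < τ)
    (hY1 : ∀ s ∈ T, Integrable (Y s) μ)
    (hY2 : ∀ s ∈ T, Integrable (fun ω => (Y s ω)^2) μ) :
    μ {ω | B ≤ ∑ s ∈ T, min (c s * |Y s ω|) τ * Real.sign (Y s ω)}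
      ≤ ENNReal.ofReal (Real.exp (-B/τ + ∑ s ∈ T,
          (c s * (∫ ω, Y s ω ∂μ) / τ + (c s)^2 * (∫ ω, (Y s ω)^2 ∂μ) / τ^2))) := by
  set h : ℤ → Ω → ℝ := fun s ω => min (c s * |Y s ω|) τ * Real.sign (Y s ω) with hh
  have hgmeas : ∀ s : ℤ, Measurable fun x : ℝ => min (c s * |x|) τ * Real.sign x := fun s =>
    ((measurable_const.mul measurable_abs).min measurable_const).mul measurable_realSign
  have hhmeas : ∀ s, Measurable (h s) := fun s => (hgmeas s).comp (hYmeas s)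
  have hhind : iIndepFun h μ :=
    hind.comp (fun s x => min (c s * |x|) τ * Real.sign x) hgmeas
  have hkey : ∀ s ω, (1/τ) * h s ω
      = min |c s * Y s ω / τ| 1 * Real.sign (c s * Y s ω / τ) := by
    intro s ω
    have e1 : c s * Y s ω / τ = (c s / τ) * Y s ω := by ring
    have hsign : Real.sign (c s * Y s ω / τ) = Real.sign (Y s ω) := by
      rw [e1, sign_const_mul (div_pos (hc s) hτ)]
    have habs : |c s * Y s ω / τ| = c s * |Y s ω| / τ := by
      rw [abs_div, abs_mul, abs_of_pos (hc s), abs_of_pos hτ]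
    have hmin : min (c s * |Y s ω| / τ) 1 = min (c s * |Y s ω|) τ / τ := by
      rcases le_total (c s * |Y s ω|) τ with hl | hl
      · rw [min_eq_left hl, min_eq_left]
        rw [div_le_one hτ]; exact hl
      · rw [min_eq_right hl, div_self hτ.ne']
        exact min_eq_right ((le_div_iff₀ hτ).2 (by linarith))
    rw [hsign, habs, hmin, hh]
    ring
  have habs_h : ∀ s ω, |h s ω| ≤ τ := by
    intro s ω
    have e : |h s ω| = τ * |(1/τ) * h s ω| := by
      rw [abs_mul (1/τ) (h s ω), abs_of_pos (by positivity : (0:ℝ) < 1/τ)]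
      field_simp
    rw [e, hkey s ω]
    calc τ * |min |c s * Y s ω / τ| 1 * Real.sign (c s * Y s ω / τ)| ≤ τ * 1 :=
          mul_le_mul_of_nonneg_left (trunc_abs_le _) hτ.le
      _ = τ := mul_one τ
  have hrmeas : Measurable fun ω => ∑ s ∈ T, h s ω :=
    Finset.measurable_sum T fun s _ => hhmeas s
  have hbdd : ∀ ω, |(1/τ) * ∑ s ∈ T, h s ω| ≤ (T.card : ℝ) := by
    intro ω
    have h1 : |∑ s ∈ T, h s ω| ≤ ∑ s ∈ T, τ := by
      refine (Finset.abs_sum_le_sum_abs _ _).trans ?_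
      exact Finset.sum_le_sum fun s _ => habs_h s ω
    rw [Finset.sum_const, nsmul_eq_mul] at h1
    rw [abs_mul, abs_of_pos (by positivity : (0:ℝ) < 1/τ)]
    calc (1/τ) * |∑ s ∈ T, h s ω| ≤ (1/τ) * ((T.card : ℝ) * τ) :=
          mul_le_mul_of_nonneg_left h1 (by positivity)
      _ = (T.card : ℝ) := by field_simp
  have hint_exp : Integrable (fun ω => Real.exp ((1/τ) * ∑ s ∈ T, h s ω)) μ := by
    refine Integrable.mono' (integrable_const (Real.exp (T.card : ℝ)))
      ((hrmeas.const_mul _).exp).aestronglyMeasurable ?_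
    filter_upwards with ω
    rw [Real.norm_eq_abs, Real.abs_exp, Real.exp_le_exp]
    exact (le_abs_self _).trans (hbdd ω)
  have hch := measure_ge_le_exp_mul_mgf (X := fun ω => ∑ s ∈ T, h s ω) (μ := μ) B
    (by positivity : (0:ℝ) ≤ 1/τ) hint_exp
  have efun : (fun ω => ∑ s ∈ T, h s ω) = ∑ s ∈ T, h s := by
    funext ω; simp [Finset.sum_apply]
  have hmgf : mgf (fun ω => ∑ s ∈ T, h s ω) μ (1/τ) = ∏ s ∈ T, mgf (h s) μ (1/τ) := by
    rw [efun]; exact hhind.mgf_sum hhmeas T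
  have hfac : ∀ s ∈ T, mgf (h s) μ (1/τ)
      ≤ Real.exp (c s * (∫ ω, Y s ω ∂μ) / τ + (c s)^2 * (∫ ω, (Y s ω)^2 ∂μ) / τ^2) := by
    intro s hs
    have hVmeas : Measurable fun ω => c s * Y s ω / τ := ((hYmeas s).const_mul _).div_const _
    have hV1 : Integrable (fun ω => c s * Y s ω / τ) μ := ((hY1 s hs).const_mul _).div_const _
    have e2 : (fun ω => (c s * Y s ω / τ)^2) = fun ω => (c s / τ)^2 * (Y s ω)^2 := by
      funext ω; ring
    have hV2 : Integrable (fun ω => (c s * Y s ω / τ)^2) μ := by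
      rw [e2]; exact (hY2 s hs).const_mul _
    have hb := integral_exp_trunc_le μ _ hVmeas hV1 hV2
    have e1 : mgf (h s) μ (1/τ)
        = ∫ ω, Real.exp (min |c s * Y s ω / τ| 1 * Real.sign (c s * Y s ω / τ)) ∂μ := by
      rw [mgf]
      refine integral_congr_ae (Filter.Eventually.of_forall fun ω => ?_)
      show Real.exp ((1/τ) * h s ω)
        = Real.exp (min |c s * Y s ω / τ| 1 * Real.sign (c s * Y s ω / τ))
      rw [hkey s ω]
    rw [e1]
    refine hb.trans (le_of_eq ?_)
    congr 1
    rw [integral_div, integral_const_mul, e2, integral_const_mul]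
    ring
  have hprod : ∏ s ∈ T, mgf (h s) μ (1/τ)
      ≤ Real.exp (∑ s ∈ T,
        (c s * (∫ ω, Y s ω ∂μ) / τ + (c s)^2 * (∫ ω, (Y s ω)^2 ∂μ) / τ^2)) := by
    rw [Real.exp_sum]
    exact Finset.prod_le_prod (fun s _ => mgf_nonneg) hfac
  have htot : (μ {ω | B ≤ ∑ s ∈ T, h s ω}).toReal
      ≤ Real.exp (-B/τ + ∑ s ∈ T,
          (c s * (∫ ω, Y s ω ∂μ) / τ + (c s)^2 * (∫ ω, (Y s ω)^2 ∂μ) / τ^2)) := by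
    refine hch.trans ?_
    rw [hmgf]
    calc Real.exp (-(1/τ) * B) * ∏ s ∈ T, mgf (h s) μ (1/τ)
        ≤ Real.exp (-(1/τ) * B) * Real.exp (∑ s ∈ T,
            (c s * (∫ ω, Y s ω ∂μ) / τ + (c s)^2 * (∫ ω, (Y s ω)^2 ∂μ) / τ^2)) :=
          mul_le_mul_of_nonneg_left hprod (Real.exp_nonneg _)
      _ = _ := by rw [← Real.exp_add]; congr 1; ring
  have hfin := ENNReal.ofReal_le_ofReal htot
  rwa [ENNReal.ofReal_toReal (measure_ne_top μ _)] at hfin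

/-- Chernoff tail bound for the weighted Huber score (proof of Theorem 1):
`P(r(θ) > B₊(θ)) ≤ exp(−z + |δ₀ₜ|/τ + 2δ₁ₜ/τ²)` and symmetrically for the lower tail. -/
theorem weighted_huber_score_tail_bound
    {Ω : Type*} [MeasurableSpace Ω] (μ : Measure Ω) [IsProbabilityMeasure μ]
    (X : ℤ → Ω → ℝ) (σ κ : ℤ → ℝ)
    (hXmeas : ∀ s, Measurable (X s))
    (hindep : iIndepFun X μ)
    (hmean : ∀ s, ∫ ω, X s ω ∂μ = 0)
    (hvar : ∀ s, ∫ ω, (X s ω) ^ 2 ∂μ = (σ s) ^ 2)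
    (hσpos : ∀ s, 0 < σ s)
    (hκ : ∀ s, ∫ ω, ((X s ω) ^ 2 - (σ s) ^ 2) ^ 2 ∂μ = κ s)
    (hX4int : ∀ s, Integrable (fun ω => (X s ω) ^ 4) μ)
    (t : ℤ) (m : ℕ) (lam : ℝ) (hlam : lam ∈ Set.Ioo (0 : ℝ) 1)
    (w : ℕ → ℝ) (hw : ∀ i, w i = lam ^ i / ∑ j ∈ Finset.range (m + 1), lam ^ j)
    (neff κdag δ0 δ1 : ℝ)
    (hneff : neff = 1 / ∑ i ∈ Finset.range (m + 1), (w i) ^ 2)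
    (hκdag : κdag = (∑ i ∈ Finset.range (m + 1), (w i) ^ 2 * κ (t + i)) /
      ∑ i ∈ Finset.range (m + 1), (w i) ^ 2)
    (hδ0 : δ0 = (∑ i ∈ Finset.range (m + 1), w i * (σ (t + i)) ^ 2) - (σ t) ^ 2)
    (hδ1 : δ1 = ∑ i ∈ Finset.range (m + 1), (w i) ^ 2 * ((σ (t + i)) ^ 2 - (σ t) ^ 2) ^ 2)
    (τ z : ℝ) (hτ : 0 < τ) (hz : 0 < z) (θ : ℝ) :
    (μ {ω | ∑ i ∈ Finset.range (m + 1),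
          min (w i * |(X (t + i) ω) ^ 2 - θ|) τ * Real.sign ((X (t + i) ω) ^ 2 - θ)
        > ((σ t) ^ 2 - θ) + (κdag + 2 * ((σ t) ^ 2 - θ) ^ 2) / (neff * τ) + τ * z}
      ≤ ENNReal.ofReal (Real.exp (-z + |δ0| / τ + 2 * δ1 / τ ^ 2))) ∧
    (μ {ω | ∑ i ∈ Finset.range (m + 1),
          min (w i * |(X (t + i) ω) ^ 2 - θ|) τ * Real.sign ((X (t + i) ω) ^ 2 - θ)
        < ((σ t) ^ 2 - θ) - (κdag + 2 * ((σ t) ^ 2 - θ) ^ 2) / (neff * τ) - τ * z}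
      ≤ ENNReal.ofReal (Real.exp (-z + |δ0| / τ + 2 * δ1 / τ ^ 2))) := by
  obtain ⟨hlam0, hlam1⟩ := hlam
  -- weights
  have hS : 0 < ∑ j ∈ Finset.range (m+1), lam ^ j :=
    Finset.sum_pos (fun j _ => pow_pos hlam0 j) (by simp)
  have hwpos : ∀ i, 0 < w i := fun i => by rw [hw]; exact div_pos (pow_pos hlam0 i) hS
  have hwsum : ∑ i ∈ Finset.range (m+1), w i = 1 := by
    simp only [hw]; rw [← Finset.sum_div, div_self hS.ne']
  have hW : 0 < ∑ i ∈ Finset.range (m+1), (w i)^2 :=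
    Finset.sum_pos (fun i _ => pow_pos (hwpos i) 2) (by simp)
  set W := ∑ i ∈ Finset.range (m+1), (w i)^2 with hWdef
  -- integrability and moments
  have hX2int : ∀ s, Integrable (fun ω => (X s ω)^2) μ := by
    intro s
    refine Integrable.mono' ((integrable_const 1).add (hX4int s))
      (((hXmeas s).pow_const 2).aestronglyMeasurable) ?_
    filter_upwards with ω
    rw [Real.norm_eq_abs, abs_of_nonneg (sq_nonneg _), Pi.add_apply]
    nlinarith [sq_nonneg ((X s ω)^2 - 1), sq_nonneg (X s ω)]
  have hsubint : ∀ (a : ℝ) (s : ℤ), Integrable (fun ω => ((X s ω)^2 - a)) μ :=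
    fun a s => (hX2int s).sub (integrable_const a)
  have hsqint : ∀ (a : ℝ) (s : ℤ), Integrable (fun ω => ((X s ω)^2 - a)^2) μ := by
    intro a s
    have e : (fun ω => ((X s ω)^2 - a)^2)
        = fun ω => ((X s ω)^4 - (2*a)*(X s ω)^2) + a^2 := funext fun ω => by ring
    rw [e]
    exact ((hX4int s).sub ((hX2int s).const_mul _)).add (integrable_const _)
  have hzero : ∀ s, ∫ ω, ((X s ω)^2 - (σ s)^2) ∂μ = 0 := by
    intro s; rw [integral_sub (hX2int s) (integrable_const _), hvar, integral_const]; simp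
  have hEY : ∀ s, ∫ ω, ((X s ω)^2 - θ) ∂μ = (σ s)^2 - θ := by
    intro s; rw [integral_sub (hX2int s) (integrable_const _), hvar, integral_const]; simp
  have hEY2 : ∀ s, ∫ ω, ((X s ω)^2 - θ)^2 ∂μ = κ s + ((σ s)^2 - θ)^2 := by
    intro s
    have h1 := hsqint ((σ s)^2) s
    have h2 : Integrable (fun ω => (2*((σ s)^2 - θ)) * ((X s ω)^2 - (σ s)^2)) μ :=
      (hsubint _ s).const_mul _
    have h12 : Integrable (fun ω => ((X s ω)^2 - (σ s)^2)^2
        + (2*((σ s)^2 - θ)) * ((X s ω)^2 - (σ s)^2)) μ := h1.add h2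
    have e : (fun ω => ((X s ω)^2 - θ)^2) = fun ω => (((X s ω)^2 - (σ s)^2)^2
        + (2*((σ s)^2 - θ)) * ((X s ω)^2 - (σ s)^2)) + ((σ s)^2 - θ)^2 :=
      funext fun ω => by ring
    rw [e, integral_add h12 (integrable_const _), integral_add h1 h2, integral_const_mul,
      hzero, hκ, integral_const]
    simp
  -- the index set
  set em : ℕ ↪ ℤ := ⟨fun i : ℕ => t + (i:ℤ), fun a b hab => by simpa using hab⟩ with hem
  set T : Finset ℤ := (Finset.range (m+1)).map em with hT
  have hti : ∀ i : ℕ, ((t + (i:ℤ)) - t).toNat = i := fun i => by omega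
  -- shared algebraic facts
  have h1sum : ∑ i ∈ Finset.range (m+1), w i * ((σ (t+(i:ℤ)))^2 - θ) = δ0 + (σ t)^2 - θ := by
    have e : ∑ i ∈ Finset.range (m+1), w i * ((σ (t+(i:ℤ)))^2 - θ)
        = (∑ i ∈ Finset.range (m+1), w i * (σ (t+(i:ℤ)))^2)
          - (∑ i ∈ Finset.range (m+1), w i) * θ := by
      simp only [mul_sub]
      rw [Finset.sum_sub_distrib, ← Finset.sum_mul]
    rw [e, hwsum, hδ0]; ring
  have h2sum : ∑ i ∈ Finset.range (m+1), (w i)^2 * (κ (t+(i:ℤ)) + ((σ (t+(i:ℤ)))^2 - θ)^2)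
      ≤ κdag * W + 2*δ1 + 2*((σ t)^2 - θ)^2 * W := by
    have hκd : ∑ i ∈ Finset.range (m+1), (w i)^2 * κ (t+(i:ℤ)) = κdag * W := by
      rw [hκdag]; field_simp
    have hterm : ∀ i ∈ Finset.range (m+1),
        (w i)^2 * (κ (t+(i:ℤ)) + ((σ (t+(i:ℤ)))^2 - θ)^2)
        ≤ (w i)^2 * κ (t+(i:ℤ)) + 2*((w i)^2 * ((σ (t+(i:ℤ)))^2 - (σ t)^2)^2)
          + (w i)^2 * (2*((σ t)^2 - θ)^2) := by
      intro i _
      nlinarith [sq_nonneg (w i),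
        sq_nonneg ((((σ (t+(i:ℤ)))^2 - (σ t)^2) - ((σ t)^2 - θ)))]
    calc ∑ i ∈ Finset.range (m+1), (w i)^2 * (κ (t+(i:ℤ)) + ((σ (t+(i:ℤ)))^2 - θ)^2)
        ≤ ∑ i ∈ Finset.range (m+1), ((w i)^2 * κ (t+(i:ℤ))
            + 2*((w i)^2 * ((σ (t+(i:ℤ)))^2 - (σ t)^2)^2)
            + (w i)^2 * (2*((σ t)^2 - θ)^2)) := Finset.sum_le_sum hterm
      _ = (∑ i ∈ Finset.range (m+1), (w i)^2 * κ (t+(i:ℤ)))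
          + 2*(∑ i ∈ Finset.range (m+1), (w i)^2 * ((σ (t+(i:ℤ)))^2 - (σ t)^2)^2)
          + W * (2*((σ t)^2 - θ)^2) := by
          rw [Finset.sum_add_distrib, Finset.sum_add_distrib, ← Finset.mul_sum,
            ← Finset.sum_mul]
      _ = κdag * W + 2*δ1 + 2*((σ t)^2 - θ)^2 * W := by
          rw [hκd, ← hδ1]; ring
  have hd0 : δ0 / τ ≤ |δ0| / τ := by gcongr; exact le_abs_self δ0
  have hd0' : -δ0 / τ ≤ |δ0| / τ := by gcongr; exact neg_le_abs δ0
  constructor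
  -- upper tail
  · have hup := huber_chernoff μ T (fun s ω => (X s ω)^2 - θ)
      (fun s => ((hXmeas s).pow_const 2).sub_const θ)
      (hindep.comp (fun _ x => x^2 - θ)
        (fun _ => (measurable_id.pow_const 2).sub_const θ))
      (fun s => w (s - t).toNat) (fun s => hwpos _)
      τ (((σ t)^2 - θ) + (κdag + 2 * ((σ t)^2 - θ)^2) / (neff * τ) + τ * z) hτ
      (fun s _ => hsubint θ s) (fun s _ => hsqint θ s)
    refine le_trans (measure_mono ?_)
      (hup.trans (ENNReal.ofReal_le_ofReal (Real.exp_le_exp.2 ?_)))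
    · intro ω hω
      simp only [Set.mem_setOf_eq] at hω ⊢
      have he : ∑ s ∈ T, min (w (s - t).toNat * |(X s ω)^2 - θ|) τ * Real.sign ((X s ω)^2 - θ)
          = ∑ i ∈ Finset.range (m+1),
            min (w i * |(X (t+(i:ℤ)) ω)^2 - θ|) τ * Real.sign ((X (t+(i:ℤ)) ω)^2 - θ) := by
        rw [hT, hem, Finset.sum_map]
        refine Finset.sum_congr rfl fun i _ => ?_
        erw [Function.Embedding.coeFn_mk]
        simp only [hti]
      rw [he]
      exact le_of_lt hω
    · -- exponent inequality, upper tail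
      have hAeq : ∑ s ∈ T, (w (s - t).toNat * (∫ ω, ((X s ω)^2 - θ) ∂μ) / τ
            + (w (s - t).toNat)^2 * (∫ ω, ((X s ω)^2 - θ)^2 ∂μ) / τ^2)
          = (∑ i ∈ Finset.range (m+1), w i * ((σ (t+(i:ℤ)))^2 - θ)) / τ
            + (∑ i ∈ Finset.range (m+1),
                (w i)^2 * (κ (t+(i:ℤ)) + ((σ (t+(i:ℤ)))^2 - θ)^2)) / τ^2 := by
        rw [hT, hem, Finset.sum_map, Finset.sum_add_distrib, ← Finset.sum_div, ← Finset.sum_div]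
        congr 1
        · congr 1
          refine Finset.sum_congr rfl fun i _ => ?_
          erw [Function.Embedding.coeFn_mk]
          simp only [hti, hEY]
        · congr 1
          refine Finset.sum_congr rfl fun i _ => ?_
          erw [Function.Embedding.coeFn_mk]
          simp only [hti, hEY2]
      rw [hAeq, h1sum]
      have hBτ : (((σ t)^2 - θ) + (κdag + 2 * ((σ t)^2 - θ)^2) / (neff * τ) + τ * z) / τ
          = ((σ t)^2 - θ)/τ + (κdag + 2*((σ t)^2 - θ)^2) * W / τ^2 + z := by
        rw [hneff]
        field_simp
      have hS2 : (∑ i ∈ Finset.range (m+1),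
            (w i)^2 * (κ (t+(i:ℤ)) + ((σ (t+(i:ℤ)))^2 - θ)^2)) / τ^2
          ≤ (κdag * W + 2*δ1 + 2*((σ t)^2 - θ)^2 * W) / τ^2 := by
        gcongr
      have hB' : -(((σ t)^2 - θ) + (κdag + 2 * ((σ t)^2 - θ)^2) / (neff * τ) + τ * z) / τ
          = -(((σ t)^2 - θ)/τ + (κdag + 2*((σ t)^2 - θ)^2) * W / τ^2 + z) := by
        rw [neg_div, hBτ]
      rw [hB']
      have e1 : (δ0 + (σ t)^2 - θ)/τ = δ0/τ + ((σ t)^2 - θ)/τ := by ring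
      have e2 : (κdag * W + 2*δ1 + 2*((σ t)^2 - θ)^2 * W) / τ^2
          = (κdag + 2*((σ t)^2 - θ)^2) * W / τ^2 + 2*δ1/τ^2 := by ring
      rw [e1] at *
      linarith [hS2, hd0]
  -- lower tail
  · have hlo := huber_chernoff μ T (fun s ω => θ - (X s ω)^2)
      (fun s => (measurable_const.sub ((hXmeas s).pow_const 2)))
      (hindep.comp (fun _ x => θ - x^2)
        (fun _ => measurable_const.sub (measurable_id.pow_const 2)))
      (fun s => w (s - t).toNat) (fun s => hwpos _)
      τ (-(((σ t)^2 - θ) - (κdag + 2 * ((σ t)^2 - θ)^2) / (neff * τ) - τ * z)) hτ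
      (fun s _ => (integrable_const θ).sub (hX2int s))
      (fun s _ => by
        have e : (fun ω => (θ - (X s ω)^2)^2) = fun ω => ((X s ω)^2 - θ)^2 :=
          funext fun ω => by ring
        rw [e]; exact hsqint θ s)
    refine le_trans (measure_mono ?_)
      (hlo.trans (ENNReal.ofReal_le_ofReal (Real.exp_le_exp.2 ?_)))
    · intro ω hω
      simp only [Set.mem_setOf_eq] at hω ⊢
      have he : ∑ s ∈ T, min (w (s - t).toNat * |θ - (X s ω)^2|) τ * Real.sign (θ - (X s ω)^2)
          = -∑ i ∈ Finset.range (m+1),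
            min (w i * |(X (t+(i:ℤ)) ω)^2 - θ|) τ * Real.sign ((X (t+(i:ℤ)) ω)^2 - θ) := by
        rw [hT, hem, Finset.sum_map, ← Finset.sum_neg_distrib]
        refine Finset.sum_congr rfl fun i _ => ?_
        erw [Function.Embedding.coeFn_mk]
        simp only [hti]
        have e1 : θ - (X (t+(i:ℤ)) ω)^2 = -((X (t+(i:ℤ)) ω)^2 - θ) := by ring
        rw [e1, Real.sign_neg, abs_neg, mul_neg]
      rw [he]
      exact neg_le_neg (le_of_lt hω)
    · -- exponent inequality, lower tail
      have hEY' : ∀ s : ℤ, ∫ ω, (θ - (X s ω)^2) ∂μ = -((σ s)^2 - θ) := by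
        intro s
        rw [integral_sub (integrable_const θ) (hX2int s), hvar, integral_const]
        simp
      have hEY2' : ∀ s : ℤ, ∫ ω, (θ - (X s ω)^2)^2 ∂μ = κ s + ((σ s)^2 - θ)^2 := by
        intro s
        have e : (fun ω => (θ - (X s ω)^2)^2) = fun ω => ((X s ω)^2 - θ)^2 :=
          funext fun ω => by ring
        rw [e]; exact hEY2 s
      have hAeq : ∑ s ∈ T, (w (s - t).toNat * (∫ ω, (θ - (X s ω)^2) ∂μ) / τ
            + (w (s - t).toNat)^2 * (∫ ω, (θ - (X s ω)^2)^2 ∂μ) / τ^2)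
          = -((∑ i ∈ Finset.range (m+1), w i * ((σ (t+(i:ℤ)))^2 - θ)) / τ)
            + (∑ i ∈ Finset.range (m+1),
                (w i)^2 * (κ (t+(i:ℤ)) + ((σ (t+(i:ℤ)))^2 - θ)^2)) / τ^2 := by
        rw [hT, hem, Finset.sum_map, Finset.sum_add_distrib, ← Finset.sum_div, ← Finset.sum_div]
        congr 1
        · rw [← neg_div, ← Finset.sum_neg_distrib]
          congr 1
          refine Finset.sum_congr rfl fun i _ => ?_
          erw [Function.Embedding.coeFn_mk]
          simp only [hti, hEY']
          ring
        · congr 1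
          refine Finset.sum_congr rfl fun i _ => ?_
          erw [Function.Embedding.coeFn_mk]
          simp only [hti, hEY2']
      rw [hAeq, h1sum]
      have hBτ : (((σ t)^2 - θ) - (κdag + 2 * ((σ t)^2 - θ)^2) / (neff * τ) - τ * z) / τ
          = ((σ t)^2 - θ)/τ - (κdag + 2*((σ t)^2 - θ)^2) * W / τ^2 - z := by
        rw [hneff]
        field_simp
      have hS2 : (∑ i ∈ Finset.range (m+1),
            (w i)^2 * (κ (t+(i:ℤ)) + ((σ (t+(i:ℤ)))^2 - θ)^2)) / τ^2
          ≤ (κdag * W + 2*δ1 + 2*((σ t)^2 - θ)^2 * W) / τ^2 := by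
        gcongr
      have hB' : -(-(((σ t)^2 - θ) - (κdag + 2 * ((σ t)^2 - θ)^2) / (neff * τ) - τ * z)) / τ
          = ((σ t)^2 - θ)/τ - (κdag + 2*((σ t)^2 - θ)^2) * W / τ^2 - z := by
        rw [neg_neg, hBτ]
      rw [hB']
      have e1 : -((δ0 + (σ t)^2 - θ)/τ) = -δ0/τ - ((σ t)^2 - θ)/τ := by ring
      have e2 : (κdag * W + 2*δ1 + 2*((σ t)^2 - θ)^2 * W) / τ^2
          = (κdag + 2*((σ t)^2 - θ)^2) * W / τ^2 + 2*δ1/τ^2 := by ring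
      rw [e1]
      linarith [hS2, hd0']
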